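/- Let (Dᵢ,eᵢ) be digroups with disemigroup presentations Disgp⟨Xᵢ | Sᵢ⟩ where eᵢ ∈ Xᵢ (i = 1,2). Then Disgp⟨X₁ ∪ X₂ | S₁ ∪ S₂ ∪ {e₁ = e₂}⟩, with distinguished element the class of e₁, is the free product of (D₁,e₁) and (D₂,e₂) in the category of digroups. -/

import Mathlib

/-- A disemigroup: two associative operations `l` (⊢) and `r` (⊣)
satisfying the dialgebra axioms. -/
structure DisemigroupStruct (D : Type) where
  l : D → D → D
  r : D → D → D
  l_assoc : ∀ a b c, l (l a b) c = l a (l b c)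
  r_assoc : ∀ a b c, r (r a b) c = r a (r b c)
  ax1 : ∀ a b c, r a (l b c) = r a (r b c)
  ax2 : ∀ a b c, l (r a b) c = l (l a b) c
  ax3 : ∀ a b c, l a (r b c) = r (l a b) c

/-- A digroup: a disemigroup with a bar-unit `one` and inverses. -/
structure DigroupStruct (D : Type) extends DisemigroupStruct D where
  one : D
  inv : D → D
  one_l : ∀ a, l one a = a
  r_one : ∀ a, r a one = a
  l_inv : ∀ a, l a (inv a) = one
  inv_r : ∀ a, r (inv a) a = one

def IsDisemigroupHom {A B : Type} (G : DisemigroupStruct A) (H : DisemigroupStruct B)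
    (f : A → B) : Prop :=
  (∀ a b, f (G.l a b) = H.l (f a) (f b)) ∧ (∀ a b, f (G.r a b) = H.r (f a) (f b))

def IsDigroupHom {A B : Type} (G : DigroupStruct A) (H : DigroupStruct B)
    (f : A → B) : Prop :=
  (∀ a b, f (G.l a b) = H.l (f a) (f b)) ∧ (∀ a b, f (G.r a b) = H.r (f a) (f b)) ∧
  f G.one = H.one

/-- The group part J = {a ⊢ 1 : a ∈ G}. -/
def groupPart {A : Type} (G : DigroupStruct A) : Set A := {a | ∃ b, a = G.l b G.one}

/-- The halo: the set of bar-units. -/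
def halo {A : Type} (G : DigroupStruct A) : Set A := {e | ∀ a, G.l e a = a ∧ G.r a e = a}

/-- `(D, g1, g2)` is a free product (coproduct) of the digroups `D1`, `D2`. -/
def IsFreeProduct {A1 A2 B : Type} (D1 : DigroupStruct A1) (D2 : DigroupStruct A2)
    (D : DigroupStruct B) (g1 : A1 → B) (g2 : A2 → B) : Prop :=
  IsDigroupHom D1 D g1 ∧ IsDigroupHom D2 D g2 ∧
  ∀ {C : Type} (G : DigroupStruct C) (f1 : A1 → C) (f2 : A2 → C),
    IsDigroupHom D1 G f1 → IsDigroupHom D2 G f2 →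
    ∃! φ : B → C, IsDigroupHom D G φ ∧ φ ∘ g1 = f1 ∧ φ ∘ g2 = f2

/-- The free disemigroup `[X⁺]_ω` on `X`: pairs `[u]_m` with `u` a nonempty word
and `1 ≤ m ≤ |u|`. -/
def FreeDi (X : Type) : Type :=
  {p : List X × ℕ // p.1 ≠ [] ∧ 1 ≤ p.2 ∧ p.2 ≤ p.1.length}

/-- `[u]_m ⊢ [v]_n = [uv]_{|u|+n}`. -/
def FreeDi.opL {X : Type} (a b : FreeDi X) : FreeDi X :=
  ⟨(a.val.1 ++ b.val.1, a.val.1.length + b.val.2), by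
    obtain ⟨ha, ha1, ha2⟩ := a.property
    obtain ⟨hb, hb1, hb2⟩ := b.property
    refine ⟨?_, by omega, ?_⟩
    · simp [List.append_eq_nil_iff, ha]
    · simp only [List.length_append]; omega⟩

/-- `[u]_m ⊣ [v]_n = [uv]_m`. -/
def FreeDi.opR {X : Type} (a b : FreeDi X) : FreeDi X :=
  ⟨(a.val.1 ++ b.val.1, a.val.2), by
    obtain ⟨ha, ha1, ha2⟩ := a.property
    obtain ⟨hb, hb1, hb2⟩ := b.property
    refine ⟨?_, by omega, ?_⟩
    · simp [List.append_eq_nil_iff, ha]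
    · simp only [List.length_append]; omega⟩

/-- The generator `[x]₁`. -/
def FreeDi.single {X : Type} (x : X) : FreeDi X := ⟨([x], 1), by simp⟩

/-- The disemigroup congruence `ρ(S)` on the free disemigroup generated by a
set of relations `S`. -/
inductive DiCong {X : Type} (S : FreeDi X → FreeDi X → Prop) :
    FreeDi X → FreeDi X → Prop
  | of {a b} : S a b → DiCong S a b
  | refl (a) : DiCong S a a
  | symm {a b} : DiCong S a b → DiCong S b a
  | trans {a b c} : DiCong S a b → DiCong S b c → DiCong S a c
  | lcongr {a b c d} : DiCong S a b → DiCong S c d →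
      DiCong S (FreeDi.opL a c) (FreeDi.opL b d)
  | rcongr {a b c d} : DiCong S a b → DiCong S c d →
      DiCong S (FreeDi.opR a c) (FreeDi.opR b d)

/-- The presented disemigroup `Disgp⟨X | S⟩`. -/
def Disgp {X : Type} (S : FreeDi X → FreeDi X → Prop) : Type := Quot (DiCong S)

/-- Map induced on free disemigroups by a map of generating sets. -/
def FreeDi.map {X Y : Type} (f : X → Y) (a : FreeDi X) : FreeDi Y :=
  ⟨(a.val.1.map f, a.val.2), by
    obtain ⟨ha, ha1, ha2⟩ := a.property
    refine ⟨by simpa using ha, ha1, by simpa using ha2⟩⟩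

namespace FPAux

variable {X Y : Type}

lemma fd_ext {a b : FreeDi X} (h : a.val = b.val) : a = b := Subtype.ext h

lemma opL_assoc (a b c : FreeDi X) : (a.opL b).opL c = a.opL (b.opL c) :=
  fd_ext (by simp [FreeDi.opL, List.append_assoc]; omega)

lemma opR_assoc (a b c : FreeDi X) : (a.opR b).opR c = a.opR (b.opR c) :=
  fd_ext (by simp [FreeDi.opR, List.append_assoc])

lemma ax1E (a b c : FreeDi X) : a.opR (b.opL c) = a.opR (b.opR c) :=
  fd_ext rfl

lemma ax2E (a b c : FreeDi X) : (a.opR b).opL c = (a.opL b).opL c :=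
  fd_ext rfl

lemma ax3E (a b c : FreeDi X) : a.opL (b.opR c) = (a.opL b).opR c :=
  fd_ext (by simp [FreeDi.opL, FreeDi.opR, List.append_assoc])

lemma map_opL (f : X → Y) (a b : FreeDi X) :
    FreeDi.map f (a.opL b) = (FreeDi.map f a).opL (FreeDi.map f b) :=
  fd_ext (by simp [FreeDi.map, FreeDi.opL])

lemma map_opR (f : X → Y) (a b : FreeDi X) :
    FreeDi.map f (a.opR b) = (FreeDi.map f a).opR (FreeDi.map f b) :=
  fd_ext (by simp [FreeDi.map, FreeDi.opR])

lemma map_single (f : X → Y) (x : X) :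
    FreeDi.map f (FreeDi.single x) = FreeDi.single (f x) := rfl

/-- Left decomposition of an element of the free disemigroup. -/
lemma decompL (a : FreeDi X) :
    (∃ x, a = FreeDi.single x) ∨
    (∃ x b, a = (FreeDi.single x).opL b) ∨
    (∃ x b, a = (FreeDi.single x).opR b) := by
  obtain ⟨⟨u, m⟩, hne, hm1, hm2⟩ := a
  match u, hne with
  | x :: v, _ =>
    simp only [List.length_cons] at hm2
    by_cases hv : v = []
    · subst hv
      simp only [List.length_nil] at hm2
      have : m = 1 := by omega
      subst this
      exact Or.inl ⟨x, rfl⟩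
    · by_cases hm : m = 1
      · subst hm
        refine Or.inr (Or.inr ⟨x, ⟨(v, 1), hv, le_rfl, ?_⟩, rfl⟩)
        show 1 ≤ v.length
        exact List.length_pos_iff.mpr hv
      · refine Or.inr (Or.inl ⟨x, ⟨(v, m - 1), hv, by show 1 ≤ m - 1; omega, by show m - 1 ≤ v.length; omega⟩, ?_⟩)
        apply fd_ext
        show (x :: v, m) = ([x] ++ v, 1 + (m - 1))
        refine Prod.ext rfl ?_
        simp; omega

/-- Right decomposition of an element of the free disemigroup. -/
lemma decompR (a : FreeDi X) :
    (∃ x, a = FreeDi.single x) ∨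
    (∃ x, ∃ b : FreeDi X, a = b.opL (FreeDi.single x)) ∨
    (∃ x, ∃ b : FreeDi X, a = b.opR (FreeDi.single x)) := by
  obtain ⟨⟨u, m⟩, hne, hm1, hm2⟩ := a
  rcases List.eq_nil_or_concat u with rfl | ⟨v, x, rfl⟩
  · exact absurd rfl hne
  · simp only [List.concat_eq_append, List.length_append, List.length_singleton] at hm2 ⊢
    by_cases hv : v = []
    · subst hv
      simp only [List.length_nil] at hm2
      have : m = 1 := by omega
      subst this
      exact Or.inl ⟨x, rfl⟩
    · by_cases hm : m ≤ v.length
      · exact Or.inr (Or.inr ⟨x, ⟨(v, m), hv, hm1, hm⟩, rfl⟩)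
      · refine Or.inr (Or.inl ⟨x, ⟨(v, v.length), hv, by show 1 ≤ v.length; exact List.length_pos_iff.mpr hv, le_rfl⟩, ?_⟩)
        apply fd_ext
        show (v ++ [x], m) = (v ++ [x], v.length + 1)
        refine Prod.ext rfl ?_
        simp; omega

/-- Structural induction for the free disemigroup. -/
lemma fd_induction (P : FreeDi X → Prop) (h1 : ∀ x, P (FreeDi.single x))
    (h2 : ∀ x b, P b → P ((FreeDi.single x).opL b))
    (h3 : ∀ x b, P b → P ((FreeDi.single x).opR b)) : ∀ a, P a := by
  have key : ∀ n (a : FreeDi X), a.val.1.length ≤ n → P a := by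
    intro n
    induction n with
    | zero =>
      intro a h
      have := a.property.1
      have : 0 < a.val.1.length := List.length_pos_iff.mpr this
      omega
    | succ n ih =>
      intro a h
      rcases decompL a with ⟨x, rfl⟩ | ⟨x, b, rfl⟩ | ⟨x, b, rfl⟩
      · exact h1 x
      · refine h2 x b (ih b ?_)
        have : ((FreeDi.single x).opL b).val.1.length = b.val.1.length + 1 := by
          simp [FreeDi.opL, FreeDi.single]
        omega
      · refine h3 x b (ih b ?_)
        have : ((FreeDi.single x).opR b).val.1.length = b.val.1.length + 1 := by
          simp [FreeDi.opR, FreeDi.single]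
        omega
  exact fun a => key a.val.1.length a le_rfl

lemma dicong_map {S : FreeDi X → FreeDi X → Prop} {T : FreeDi Y → FreeDi Y → Prop}
    (f : X → Y) (hf : ∀ a b, S a b → DiCong T (FreeDi.map f a) (FreeDi.map f b))
    {a b : FreeDi X} (h : DiCong S a b) :
    DiCong T (FreeDi.map f a) (FreeDi.map f b) := by
  induction h with
  | of h => exact hf _ _ h
  | refl a => exact DiCong.refl _
  | symm _ ih => exact ih.symm
  | trans _ _ ih1 ih2 => exact ih1.trans ih2
  | lcongr _ _ ih1 ih2 => rw [map_opL, map_opL]; exact ih1.lcongr ih2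
  | rcongr _ _ ih1 ih2 => rw [map_opR, map_opR]; exact ih1.rcongr ih2

lemma dicong_of_mk_eq {S : FreeDi X → FreeDi X → Prop} {a b : FreeDi X}
    (h : Quot.mk (DiCong S) a = Quot.mk (DiCong S) b) : DiCong S a b := by
  have h2 : Relation.EqvGen (DiCong S) a b := Quot.eqvGen_exact h
  clear h
  induction h2 with
  | rel _ _ h => exact h
  | refl a => exact DiCong.refl _
  | symm _ _ _ ih => exact ih.symm
  | trans _ _ _ _ _ ih1 ih2 => exact ih1.trans ih2

/-- Left multiplication on the presented disemigroup. -/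
def QL {X : Type} (S : FreeDi X → FreeDi X → Prop) : Disgp S → Disgp S → Disgp S :=
  Quot.lift
    (fun a => Quot.lift (fun b => Quot.mk (DiCong S) (a.opL b))
      (fun _ _ h => Quot.sound ((DiCong.refl a).lcongr h)))
    (fun _ _ h => funext fun q => Quot.inductionOn q
      fun b => Quot.sound (h.lcongr (DiCong.refl b)))

/-- Right multiplication on the presented disemigroup. -/
def QR {X : Type} (S : FreeDi X → FreeDi X → Prop) : Disgp S → Disgp S → Disgp S :=
  Quot.lift
    (fun a => Quot.lift (fun b => Quot.mk (DiCong S) (a.opR b))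
      (fun _ _ h => Quot.sound ((DiCong.refl a).rcongr h)))
    (fun _ _ h => funext fun q => Quot.inductionOn q
      fun b => Quot.sound (h.rcongr (DiCong.refl b)))

/-- The presented disemigroup as a `DisemigroupStruct`. -/
def QSemi {X : Type} (S : FreeDi X → FreeDi X → Prop) : DisemigroupStruct (Disgp S) where
  l := QL S
  r := QR S
  l_assoc := by
    intro p q r
    induction p using Quot.ind with | _ a =>
    induction q using Quot.ind with | _ b =>
    induction r using Quot.ind with | _ c =>
    exact congrArg (Quot.mk _) (opL_assoc a b c)
  r_assoc := by
    intro p q r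
    induction p using Quot.ind with | _ a =>
    induction q using Quot.ind with | _ b =>
    induction r using Quot.ind with | _ c =>
    exact congrArg (Quot.mk _) (opR_assoc a b c)
  ax1 := by
    intro p q r
    induction p using Quot.ind with | _ a =>
    induction q using Quot.ind with | _ b =>
    induction r using Quot.ind with | _ c =>
    exact congrArg (Quot.mk _) (ax1E a b c)
  ax2 := by
    intro p q r
    induction p using Quot.ind with | _ a =>
    induction q using Quot.ind with | _ b =>
    induction r using Quot.ind with | _ c =>
    exact congrArg (Quot.mk _) (ax2E a b c)
  ax3 := by
    intro p q r
    induction p using Quot.ind with | _ a =>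
    induction q using Quot.ind with | _ b =>
    induction r using Quot.ind with | _ c =>
    exact congrArg (Quot.mk _) (ax3E a b c)

/-- In a digroup, `a⁻¹ ⊢ 1 = a⁻¹`. -/
lemma linv_one {C : Type} (G : DigroupStruct C) (a : C) :
    G.l (G.inv a) G.one = G.inv a := by
  conv_lhs => rw [← G.l_inv a, ← G.l_assoc, ← G.ax2, G.inv_r, G.one_l]

/-- Closure of the set of invertible elements (with inverse in the group part)
under the two operations, in a disemigroup with a bar-unit. -/
lemma inv_pair {C : Type} (G : DisemigroupStruct C) (e : C)
    (he : ∀ a, G.l e a = a)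
    {x y x' y' : C} (h1 : G.l x y = e) (h2 : G.r y x = e) (h3 : G.l y e = y)
    (h1' : G.l x' y' = e) (h2' : G.r y' x' = e) (h3' : G.l y' e = y') :
    (G.l (G.l x x') (G.l y' y) = e ∧ G.r (G.l y' y) (G.l x x') = e) ∧
    (G.l (G.r x x') (G.l y' y) = e ∧ G.r (G.l y' y) (G.r x x') = e) ∧
    G.l (G.l y' y) e = G.l y' y := by
  have key1 : G.l (G.l x x') (G.l y' y) = e := by
    rw [G.l_assoc, ← G.l_assoc x' y' y, h1', he, h1]
  have key2 : G.r (G.l y' y) x = y' := by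
    rw [← G.ax3, h2, h3']
  have key3 : G.r (G.l y' y) (G.l x x') = e := by
    rw [G.ax1, ← G.r_assoc, key2, h2']
  refine ⟨⟨key1, key3⟩, ⟨?_, ?_⟩, ?_⟩
  · rw [G.ax2]; exact key1
  · rw [← G.r_assoc, key2, h2']
  · rw [G.l_assoc, h3]

section Eval

variable {C : Type} (G : DisemigroupStruct C) (c0 : C) (gen : X → C)

/-- Evaluation of a pointed word in a disemigroup. -/
def Fev : List X → ℕ → C
  | [], _ => c0
  | x :: t, m =>
    if t.isEmpty then gen x
    else if m ≤ 1 then G.r (gen x) (Fev t 1)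
    else G.l (gen x) (Fev t (m - 1))

lemma Fev_single (x : X) (m : ℕ) : Fev G c0 gen [x] m = gen x := by
  simp [Fev]

lemma Fev_cons (x y : X) (s : List X) (m : ℕ) :
    Fev G c0 gen (x :: y :: s) m =
      if m ≤ 1 then G.r (gen x) (Fev G c0 gen (y :: s) 1)
      else G.l (gen x) (Fev G c0 gen (y :: s) (m - 1)) := by
  simp [Fev]

lemma Fev_l_indep : ∀ (t : List X) (x : X) (m m' : ℕ) (z : C),
    G.l (Fev G c0 gen (x :: t) m) z = G.l (Fev G c0 gen (x :: t) m') z := by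
  intro t
  induction t with
  | nil => intro x m m' z; rw [Fev_single, Fev_single]
  | cons y s ih =>
    intro x m m' z
    have key : ∀ k k', G.l (G.l (gen x) (Fev G c0 gen (y :: s) k)) z =
        G.l (G.l (gen x) (Fev G c0 gen (y :: s) k')) z := by
      intro k k'
      rw [G.l_assoc, G.l_assoc, ih]
    have convr : ∀ w, G.l (G.r (gen x) w) z = G.l (G.l (gen x) w) z :=
      fun w => G.ax2 (gen x) w z
    rw [Fev_cons, Fev_cons]
    split_ifs
    · rfl
    · rw [convr]; exact key _ _
    · rw [convr]; exact key _ _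
    · exact key _ _

lemma Fev_r_indep : ∀ (t : List X) (x : X) (k k' : ℕ) (z : C),
    G.r z (Fev G c0 gen (x :: t) k) = G.r z (Fev G c0 gen (x :: t) k') := by
  intro t
  induction t with
  | nil => intro x k k' z; rw [Fev_single, Fev_single]
  | cons y s ih =>
    intro x k k' z
    have key : ∀ j j', G.r z (G.r (gen x) (Fev G c0 gen (y :: s) j)) =
        G.r z (G.r (gen x) (Fev G c0 gen (y :: s) j')) := by
      intro j j'
      rw [← G.r_assoc, ← G.r_assoc, ih]
    have convl : ∀ w, G.r z (G.l (gen x) w) = G.r z (G.r (gen x) w) :=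
      fun w => G.ax1 z (gen x) w
    rw [Fev_cons, Fev_cons]
    split_ifs
    · rfl
    · rw [convl]; exact key _ _
    · rw [convl]; exact key _ _
    · rw [convl, convl]; exact key _ _

lemma Fev_append_l : ∀ (u : List X) (x : X) (v : List X), v ≠ [] → ∀ n, 1 ≤ n →
    Fev G c0 gen (x :: u ++ v) (u.length + 1 + n) =
      G.l (Fev G c0 gen (x :: u) (u.length + 1)) (Fev G c0 gen v n) := by
  intro u
  induction u with
  | nil =>
    intro x v hv n hn
    match v, hv with
    | y :: s, _ =>
      show Fev G c0 gen (x :: y :: s) (0 + 1 + n) = G.l (Fev G c0 gen [x] (0 + 1)) _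
      rw [Fev_cons, if_neg (by omega), Fev_single,
        show 0 + 1 + n - 1 = n from by omega]
  | cons y u ih =>
    intro x v hv n hn
    show Fev G c0 gen (x :: (y :: (u ++ v))) ((y :: u).length + 1 + n) = _
    rw [Fev_cons, if_neg (by simp; omega),
      show (y :: u).length + 1 + n - 1 = u.length + 1 + n from by simp,
      ← List.cons_append, ih y v hv n hn, ← G.l_assoc]
    congr 1

lemma Fev_append_r : ∀ (u : List X) (x : X) (v : List X), v ≠ [] → ∀ m, m ≤ u.length + 1 →
    Fev G c0 gen (x :: u ++ v) m =
      G.r (Fev G c0 gen (x :: u) m) (Fev G c0 gen v 1) := by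
  intro u
  induction u with
  | nil =>
    intro x v hv m hm
    match v, hv with
    | y :: s, _ =>
      show Fev G c0 gen (x :: y :: s) m = G.r (Fev G c0 gen [x] m) _
      rw [Fev_cons, if_pos (by simpa using hm), Fev_single]
  | cons y u ih =>
    intro x v hv m hm
    show Fev G c0 gen (x :: (y :: (u ++ v))) m = _
    by_cases hm1 : m ≤ 1
    · rw [Fev_cons, if_pos hm1, ← List.cons_append, ih y v hv 1 (by omega), ← G.r_assoc]
      congr 1
      rw [Fev_cons, if_pos hm1]
    · have hm2 : m - 1 ≤ u.length + 1 := by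
        simp only [List.length_cons] at hm
        omega
      rw [Fev_cons, if_neg hm1, ← List.cons_append, ih y v hv (m - 1) hm2, G.ax3]
      congr 1
      rw [Fev_cons, if_neg hm1]

/-- Evaluation of elements of the free disemigroup. -/
def evF (a : FreeDi X) : C := Fev G c0 gen a.val.1 a.val.2

lemma evF_single (x : X) : evF G c0 gen (FreeDi.single x) = gen x := by
  simp [evF, FreeDi.single, Fev]

lemma Fev_l_indep' {u : List X} (hu : u ≠ []) (m m' : ℕ) (z : C) :
    G.l (Fev G c0 gen u m) z = G.l (Fev G c0 gen u m') z := by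
  match u, hu with
  | x :: t, _ => exact Fev_l_indep G c0 gen t x m m' z

lemma Fev_r_indep' {v : List X} (hv : v ≠ []) (k k' : ℕ) (z : C) :
    G.r z (Fev G c0 gen v k) = G.r z (Fev G c0 gen v k') := by
  match v, hv with
  | x :: t, _ => exact Fev_r_indep G c0 gen t x k k' z

lemma evF_opL (a b : FreeDi X) :
    evF G c0 gen (a.opL b) = G.l (evF G c0 gen a) (evF G c0 gen b) := by
  obtain ⟨⟨u, m⟩, hu, hm1, hm2⟩ := a
  obtain ⟨⟨v, n⟩, hv, hn1, hn2⟩ := b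
  match u, hu with
  | x :: u, _ =>
    show Fev G c0 gen (x :: u ++ v) ((x :: u).length + n) =
      G.l (Fev G c0 gen (x :: u) m) (Fev G c0 gen v n)
    rw [show (x :: u).length = u.length + 1 from rfl, Fev_append_l G c0 gen u x v hv n hn1]
    exact Fev_l_indep G c0 gen u x (u.length + 1) m _

lemma evF_opR (a b : FreeDi X) :
    evF G c0 gen (a.opR b) = G.r (evF G c0 gen a) (evF G c0 gen b) := by
  obtain ⟨⟨u, m⟩, hu, hm1, hm2⟩ := a
  obtain ⟨⟨v, n⟩, hv, hn1, hn2⟩ := b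
  match u, hu with
  | x :: u, _ =>
    show Fev G c0 gen (x :: u ++ v) m = G.r (Fev G c0 gen (x :: u) m) (Fev G c0 gen v n)
    rw [Fev_append_r G c0 gen u x v hv m (by simpa using hm2)]
    exact Fev_r_indep' G c0 gen hv 1 n _

end Eval

end FPAux

/-- Given digroups `(Dᵢ, eᵢ)` with disemigroup presentations `Disgp⟨Xᵢ | Sᵢ⟩`
(with `eᵢ ∈ Xᵢ`), the presentation `Disgp⟨X₁ ⊔ X₂ | S₁ ∪ S₂ ∪ {e₁ = e₂}⟩`, with
distinguished element the class of `e₁`, is the free product of the digroups. -/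
theorem freeProduct_of_presentations {X1 X2 D1 D2 : Type}
    (S1 : FreeDi X1 → FreeDi X1 → Prop) (S2 : FreeDi X2 → FreeDi X2 → Prop)
    (D1st : DigroupStruct D1) (D2st : DigroupStruct D2)
    (e1 : X1) (e2 : X2)
    (φ1 : Disgp S1 → D1) (hφ1bij : Function.Bijective φ1)
    (hφ1l : ∀ a b : FreeDi X1,
      φ1 (Quot.mk _ (FreeDi.opL a b)) = D1st.l (φ1 (Quot.mk _ a)) (φ1 (Quot.mk _ b)))
    (hφ1r : ∀ a b : FreeDi X1,
      φ1 (Quot.mk _ (FreeDi.opR a b)) = D1st.r (φ1 (Quot.mk _ a)) (φ1 (Quot.mk _ b)))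
    (hφ1e : φ1 (Quot.mk _ (FreeDi.single e1)) = D1st.one)
    (φ2 : Disgp S2 → D2) (hφ2bij : Function.Bijective φ2)
    (hφ2l : ∀ a b : FreeDi X2,
      φ2 (Quot.mk _ (FreeDi.opL a b)) = D2st.l (φ2 (Quot.mk _ a)) (φ2 (Quot.mk _ b)))
    (hφ2r : ∀ a b : FreeDi X2,
      φ2 (Quot.mk _ (FreeDi.opR a b)) = D2st.r (φ2 (Quot.mk _ a)) (φ2 (Quot.mk _ b)))
    (hφ2e : φ2 (Quot.mk _ (FreeDi.single e2)) = D2st.one) :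
    ∀ S : FreeDi (X1 ⊕ X2) → FreeDi (X1 ⊕ X2) → Prop,
    (∀ a b, S a b ↔
      (∃ a' b', S1 a' b' ∧ a = FreeDi.map Sum.inl a' ∧ b = FreeDi.map Sum.inl b') ∨
      (∃ a' b', S2 a' b' ∧ a = FreeDi.map Sum.inr a' ∧ b = FreeDi.map Sum.inr b') ∨
      (a = FreeDi.single (Sum.inl e1) ∧ b = FreeDi.single (Sum.inr e2))) →
    ∃ (Q : DigroupStruct (Disgp S)) (g1 : D1 → Disgp S) (g2 : D2 → Disgp S),
      (∀ a b : FreeDi (X1 ⊕ X2),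
        Q.l (Quot.mk _ a) (Quot.mk _ b) = Quot.mk _ (FreeDi.opL a b)) ∧
      (∀ a b : FreeDi (X1 ⊕ X2),
        Q.r (Quot.mk _ a) (Quot.mk _ b) = Quot.mk _ (FreeDi.opR a b)) ∧
      Q.one = Quot.mk _ (FreeDi.single (Sum.inl e1)) ∧
      (∀ w : FreeDi X1, g1 (φ1 (Quot.mk _ w)) = Quot.mk _ (FreeDi.map Sum.inl w)) ∧
      (∀ w : FreeDi X2, g2 (φ2 (Quot.mk _ w)) = Quot.mk _ (FreeDi.map Sum.inr w)) ∧
      IsFreeProduct D1st D2st Q g1 g2 := by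
  intro S hS
  classical
  -- Transfer of the congruences along the inclusions of generators
  have hmap1 : ∀ {a b : FreeDi X1}, DiCong S1 a b →
      DiCong S (FreeDi.map Sum.inl a) (FreeDi.map Sum.inl b) := by
    intro a b h
    exact FPAux.dicong_map Sum.inl
      (fun a' b' h' => DiCong.of ((hS _ _).2 (Or.inl ⟨a', b', h', rfl, rfl⟩))) h
  have hmap2 : ∀ {a b : FreeDi X2}, DiCong S2 a b →
      DiCong S (FreeDi.map Sum.inr a) (FreeDi.map Sum.inr b) := by
    intro a b h
    exact FPAux.dicong_map Sum.inr
      (fun a' b' h' => DiCong.of ((hS _ _).2 (Or.inr (Or.inl ⟨a', b', h', rfl, rfl⟩)))) h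
  have hc1 : ∀ a b : FreeDi X1, φ1 (Quot.mk _ a) = φ1 (Quot.mk _ b) →
      DiCong S (FreeDi.map Sum.inl a) (FreeDi.map Sum.inl b) :=
    fun a b h => hmap1 (FPAux.dicong_of_mk_eq (hφ1bij.1 h))
  have hc2 : ∀ a b : FreeDi X2, φ2 (Quot.mk _ a) = φ2 (Quot.mk _ b) →
      DiCong S (FreeDi.map Sum.inr a) (FreeDi.map Sum.inr b) :=
    fun a b h => hmap2 (FPAux.dicong_of_mk_eq (hφ2bij.1 h))
  have hee : DiCong S (FreeDi.single (Sum.inl e1)) (FreeDi.single (Sum.inr e2)) :=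
    DiCong.of ((hS _ _).2 (Or.inr (Or.inr ⟨rfl, rfl⟩)))
  -- The class of `e1` is a left bar-unit on generators
  have genL : ∀ y : X1 ⊕ X2,
      DiCong S ((FreeDi.single (Sum.inl e1)).opL (FreeDi.single y)) (FreeDi.single y) := by
    intro y
    cases y with
    | inl x =>
      have h := hc1 ((FreeDi.single e1).opL (FreeDi.single x)) (FreeDi.single x)
        (by rw [hφ1l, hφ1e, D1st.one_l])
      rwa [FPAux.map_opL, FPAux.map_single, FPAux.map_single] at h
    | inr x =>
      refine DiCong.trans (DiCong.lcongr hee (DiCong.refl _)) ?_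
      have h := hc2 ((FreeDi.single e2).opL (FreeDi.single x)) (FreeDi.single x)
        (by rw [hφ2l, hφ2e, D2st.one_l])
      rwa [FPAux.map_opL, FPAux.map_single, FPAux.map_single] at h
  have genR : ∀ y : X1 ⊕ X2,
      DiCong S ((FreeDi.single y).opR (FreeDi.single (Sum.inl e1))) (FreeDi.single y) := by
    intro y
    cases y with
    | inl x =>
      have h := hc1 ((FreeDi.single x).opR (FreeDi.single e1)) (FreeDi.single x)
        (by rw [hφ1r, hφ1e, D1st.r_one])
      rwa [FPAux.map_opR, FPAux.map_single, FPAux.map_single] at h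
    | inr x =>
      refine DiCong.trans (DiCong.rcongr (DiCong.refl _) hee) ?_
      have h := hc2 ((FreeDi.single x).opR (FreeDi.single e2)) (FreeDi.single x)
        (by rw [hφ2r, hφ2e, D2st.r_one])
      rwa [FPAux.map_opR, FPAux.map_single, FPAux.map_single] at h
  -- The class of `e1` is a bar-unit
  have unitL : ∀ a : FreeDi (X1 ⊕ X2),
      DiCong S ((FreeDi.single (Sum.inl e1)).opL a) a := by
    intro a
    rcases FPAux.decompL a with ⟨x, rfl⟩ | ⟨x, b, rfl⟩ | ⟨x, b, rfl⟩
    · exact genL x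
    · rw [← FPAux.opL_assoc]
      exact (genL x).lcongr (DiCong.refl b)
    · rw [FPAux.ax3E]
      exact (genL x).rcongr (DiCong.refl b)
  have unitR : ∀ a : FreeDi (X1 ⊕ X2),
      DiCong S (a.opR (FreeDi.single (Sum.inl e1))) a := by
    intro a
    rcases FPAux.decompR a with ⟨x, rfl⟩ | ⟨x, b, rfl⟩ | ⟨x, b, rfl⟩
    · exact genR x
    · rw [← FPAux.ax3E]
      exact (DiCong.refl b).lcongr (genR x)
    · rw [FPAux.opR_assoc]
      exact (DiCong.refl b).rcongr (genR x)
  have qUnitL : ∀ q : Disgp S,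
      (FPAux.QSemi S).l (Quot.mk _ (FreeDi.single (Sum.inl e1))) q = q :=
    fun q => Quot.inductionOn q fun a => Quot.sound (unitL a)
  have qUnitR : ∀ q : Disgp S,
      (FPAux.QSemi S).r q (Quot.mk _ (FreeDi.single (Sum.inl e1))) = q :=
    fun q => Quot.inductionOn q fun a => Quot.sound (unitR a)
  -- Existence of inverses
  have base : ∀ x : X1 ⊕ X2, ∃ y : Disgp S,
      (FPAux.QSemi S).l (Quot.mk _ (FreeDi.single x)) y =
        Quot.mk _ (FreeDi.single (Sum.inl e1)) ∧
      (FPAux.QSemi S).r y (Quot.mk _ (FreeDi.single x)) =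
        Quot.mk _ (FreeDi.single (Sum.inl e1)) ∧
      (FPAux.QSemi S).l y (Quot.mk _ (FreeDi.single (Sum.inl e1))) = y := by
    intro x
    cases x with
    | inl x =>
      obtain ⟨qd, hqd⟩ := hφ1bij.2 (D1st.inv (φ1 (Quot.mk _ (FreeDi.single x))))
      obtain ⟨w, rfl⟩ := Quot.exists_rep qd
      refine ⟨Quot.mk _ (FreeDi.map Sum.inl w), ?_, ?_, ?_⟩
      · have h := hc1 ((FreeDi.single x).opL w) (FreeDi.single e1)
          (by rw [hφ1l, hqd, D1st.l_inv, hφ1e])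
        rw [FPAux.map_opL, FPAux.map_single, FPAux.map_single] at h
        exact Quot.sound h
      · have h := hc1 (w.opR (FreeDi.single x)) (FreeDi.single e1)
          (by rw [hφ1r, hqd, D1st.inv_r, hφ1e])
        rw [FPAux.map_opR, FPAux.map_single, FPAux.map_single] at h
        exact Quot.sound h
      · have h := hc1 (w.opL (FreeDi.single e1)) w
          (by rw [hφ1l, hqd, hφ1e, FPAux.linv_one])
        rw [FPAux.map_opL, FPAux.map_single] at h
        exact Quot.sound h
    | inr x =>
      obtain ⟨qd, hqd⟩ := hφ2bij.2 (D2st.inv (φ2 (Quot.mk _ (FreeDi.single x))))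
      obtain ⟨w, rfl⟩ := Quot.exists_rep qd
      refine ⟨Quot.mk _ (FreeDi.map Sum.inr w), ?_, ?_, ?_⟩
      · have h := hc2 ((FreeDi.single x).opL w) (FreeDi.single e2)
          (by rw [hφ2l, hqd, D2st.l_inv, hφ2e])
        rw [FPAux.map_opL, FPAux.map_single, FPAux.map_single] at h
        exact Quot.sound (h.trans hee.symm)
      · have h := hc2 (w.opR (FreeDi.single x)) (FreeDi.single e2)
          (by rw [hφ2r, hqd, D2st.inv_r, hφ2e])
        rw [FPAux.map_opR, FPAux.map_single, FPAux.map_single] at h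
        exact Quot.sound (h.trans hee.symm)
      · have h := hc2 (w.opL (FreeDi.single e2)) w
          (by rw [hφ2l, hqd, hφ2e, FPAux.linv_one])
        rw [FPAux.map_opL, FPAux.map_single] at h
        exact Quot.sound (((DiCong.refl (FreeDi.map Sum.inr w)).lcongr hee).trans h)
  have hinv : ∀ q : Disgp S, ∃ y : Disgp S,
      (FPAux.QSemi S).l q y = Quot.mk _ (FreeDi.single (Sum.inl e1)) ∧
      (FPAux.QSemi S).r y q = Quot.mk _ (FreeDi.single (Sum.inl e1)) ∧
      (FPAux.QSemi S).l y (Quot.mk _ (FreeDi.single (Sum.inl e1))) = y := by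
    intro q
    induction q using Quot.ind with | _ a =>
    refine FPAux.fd_induction (fun a => ∃ y : Disgp S,
      (FPAux.QSemi S).l (Quot.mk _ a) y = Quot.mk _ (FreeDi.single (Sum.inl e1)) ∧
      (FPAux.QSemi S).r y (Quot.mk _ a) = Quot.mk _ (FreeDi.single (Sum.inl e1)) ∧
      (FPAux.QSemi S).l y (Quot.mk _ (FreeDi.single (Sum.inl e1))) = y) base ?_ ?_ a
    · intro x b hb
      obtain ⟨y, hy1, hy2, hy3⟩ := hb
      obtain ⟨y', hy1', hy2', hy3'⟩ := base x
      obtain ⟨⟨c1, c2⟩, _, c3⟩ := FPAux.inv_pair (FPAux.QSemi S)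
        (Quot.mk _ (FreeDi.single (Sum.inl e1))) qUnitL hy1' hy2' hy3' hy1 hy2 hy3
      exact ⟨(FPAux.QSemi S).l y y', c1, c2, c3⟩
    · intro x b hb
      obtain ⟨y, hy1, hy2, hy3⟩ := hb
      obtain ⟨y', hy1', hy2', hy3'⟩ := base x
      obtain ⟨_, ⟨c1, c2⟩, c3⟩ := FPAux.inv_pair (FPAux.QSemi S)
        (Quot.mk _ (FreeDi.single (Sum.inl e1))) qUnitL hy1' hy2' hy3' hy1 hy2 hy3
      exact ⟨(FPAux.QSemi S).l y y', c1, c2, c3⟩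
  -- The digroup structure on the presented disemigroup
  let Qst : DigroupStruct (Disgp S) :=
    { toDisemigroupStruct := FPAux.QSemi S
      one := Quot.mk _ (FreeDi.single (Sum.inl e1))
      inv := fun q => Classical.choose (hinv q)
      one_l := qUnitL
      r_one := qUnitR
      l_inv := fun q => (Classical.choose_spec (hinv q)).1
      inv_r := fun q => (Classical.choose_spec (hinv q)).2.1 }
  -- The inclusion maps
  let g1 : D1 → Disgp S := fun d =>
    Quot.lift (fun w : FreeDi X1 => Quot.mk (DiCong S) (FreeDi.map Sum.inl w))
      (fun _ _ h => Quot.sound (hmap1 h)) ((Equiv.ofBijective φ1 hφ1bij).symm d)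
  let g2 : D2 → Disgp S := fun d =>
    Quot.lift (fun w : FreeDi X2 => Quot.mk (DiCong S) (FreeDi.map Sum.inr w))
      (fun _ _ h => Quot.sound (hmap2 h)) ((Equiv.ofBijective φ2 hφ2bij).symm d)
  have hg1 : ∀ w : FreeDi X1,
      g1 (φ1 (Quot.mk _ w)) = Quot.mk _ (FreeDi.map Sum.inl w) := by
    intro w
    show Quot.lift _ _ ((Equiv.ofBijective φ1 hφ1bij).symm
      ((Equiv.ofBijective φ1 hφ1bij) (Quot.mk _ w))) = _
    exact congrArg (Quot.lift (fun w : FreeDi X1 => Quot.mk (DiCong S) (FreeDi.map Sum.inl w))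
      (fun _ _ h => Quot.sound (hmap1 h))) ((Equiv.ofBijective φ1 hφ1bij).symm_apply_apply (Quot.mk _ w))
  have hg2 : ∀ w : FreeDi X2,
      g2 (φ2 (Quot.mk _ w)) = Quot.mk _ (FreeDi.map Sum.inr w) := by
    intro w
    show Quot.lift _ _ ((Equiv.ofBijective φ2 hφ2bij).symm
      ((Equiv.ofBijective φ2 hφ2bij) (Quot.mk _ w))) = _
    exact congrArg (Quot.lift (fun w : FreeDi X2 => Quot.mk (DiCong S) (FreeDi.map Sum.inr w))
      (fun _ _ h => Quot.sound (hmap2 h))) ((Equiv.ofBijective φ2 hφ2bij).symm_apply_apply (Quot.mk _ w))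
  have rep1 : ∀ d : D1, ∃ w : FreeDi X1, φ1 (Quot.mk _ w) = d := by
    intro d
    obtain ⟨q, hq⟩ := hφ1bij.2 d
    obtain ⟨w, rfl⟩ := Quot.exists_rep q
    exact ⟨w, hq⟩
  have rep2 : ∀ d : D2, ∃ w : FreeDi X2, φ2 (Quot.mk _ w) = d := by
    intro d
    obtain ⟨q, hq⟩ := hφ2bij.2 d
    obtain ⟨w, rfl⟩ := Quot.exists_rep q
    exact ⟨w, hq⟩
  have hom1 : IsDigroupHom D1st Qst g1 := by
    refine ⟨?_, ?_, ?_⟩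
    · intro d d'
      obtain ⟨w, rfl⟩ := rep1 d
      obtain ⟨w', rfl⟩ := rep1 d'
      rw [← hφ1l, hg1, hg1, hg1]
      show Quot.mk _ (FreeDi.map Sum.inl (w.opL w')) =
        Quot.mk _ ((FreeDi.map Sum.inl w).opL (FreeDi.map Sum.inl w'))
      rw [FPAux.map_opL]
    · intro d d'
      obtain ⟨w, rfl⟩ := rep1 d
      obtain ⟨w', rfl⟩ := rep1 d'
      rw [← hφ1r, hg1, hg1, hg1]
      show Quot.mk _ (FreeDi.map Sum.inl (w.opR w')) =
        Quot.mk _ ((FreeDi.map Sum.inl w).opR (FreeDi.map Sum.inl w'))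
      rw [FPAux.map_opR]
    · rw [← hφ1e, hg1]
      rfl
  have hom2 : IsDigroupHom D2st Qst g2 := by
    refine ⟨?_, ?_, ?_⟩
    · intro d d'
      obtain ⟨w, rfl⟩ := rep2 d
      obtain ⟨w', rfl⟩ := rep2 d'
      rw [← hφ2l, hg2, hg2, hg2]
      show Quot.mk _ (FreeDi.map Sum.inr (w.opL w')) =
        Quot.mk _ ((FreeDi.map Sum.inr w).opL (FreeDi.map Sum.inr w'))
      rw [FPAux.map_opL]
    · intro d d'
      obtain ⟨w, rfl⟩ := rep2 d
      obtain ⟨w', rfl⟩ := rep2 d'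
      rw [← hφ2r, hg2, hg2, hg2]
      show Quot.mk _ (FreeDi.map Sum.inr (w.opR w')) =
        Quot.mk _ ((FreeDi.map Sum.inr w).opR (FreeDi.map Sum.inr w'))
      rw [FPAux.map_opR]
    · rw [← hφ2e, hg2]
      exact Quot.sound hee.symm
  refine ⟨Qst, g1, g2, fun a b => rfl, fun a b => rfl, rfl, hg1, hg2, hom1, hom2, ?_⟩
  -- Universal property
  intro C G f1 f2 hf1 hf2
  set gen : X1 ⊕ X2 → C :=
    Sum.elim (fun x => f1 (φ1 (Quot.mk _ (FreeDi.single x))))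
      (fun x => f2 (φ2 (Quot.mk _ (FreeDi.single x)))) with hgen
  have ev1 : ∀ w : FreeDi X1,
      FPAux.evF G.toDisemigroupStruct G.one gen (FreeDi.map Sum.inl w) =
        f1 (φ1 (Quot.mk _ w)) := by
    refine FPAux.fd_induction _ ?_ ?_ ?_
    · intro x
      show FPAux.evF G.toDisemigroupStruct G.one gen (FreeDi.single (Sum.inl x)) = _
      rw [FPAux.evF_single]
      rfl
    · intro x b ih
      rw [FPAux.map_opL, FPAux.map_single, FPAux.evF_opL, FPAux.evF_single, ih,
        hφ1l, hf1.1]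
      rfl
    · intro x b ih
      rw [FPAux.map_opR, FPAux.map_single, FPAux.evF_opR, FPAux.evF_single, ih,
        hφ1r, hf1.2.1]
      rfl
  have ev2 : ∀ w : FreeDi X2,
      FPAux.evF G.toDisemigroupStruct G.one gen (FreeDi.map Sum.inr w) =
        f2 (φ2 (Quot.mk _ w)) := by
    refine FPAux.fd_induction _ ?_ ?_ ?_
    · intro x
      show FPAux.evF G.toDisemigroupStruct G.one gen (FreeDi.single (Sum.inr x)) = _
      rw [FPAux.evF_single]
      rfl
    · intro x b ih
      rw [FPAux.map_opL, FPAux.map_single, FPAux.evF_opL, FPAux.evF_single, ih,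
        hφ2l, hf2.1]
      rfl
    · intro x b ih
      rw [FPAux.map_opR, FPAux.map_single, FPAux.evF_opR, FPAux.evF_single, ih,
        hφ2r, hf2.2.1]
      rfl
  have evcong : ∀ a b : FreeDi (X1 ⊕ X2), DiCong S a b →
      FPAux.evF G.toDisemigroupStruct G.one gen a =
        FPAux.evF G.toDisemigroupStruct G.one gen b := by
    intro a b h
    induction h with
    | of h =>
      rcases (hS _ _).1 h with ⟨a', b', h', rfl, rfl⟩ | ⟨a', b', h', rfl, rfl⟩ | ⟨rfl, rfl⟩
      · rw [ev1, ev1, Quot.sound (DiCong.of h')]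
      · rw [ev2, ev2, Quot.sound (DiCong.of h')]
      · rw [FPAux.evF_single, FPAux.evF_single]
        show f1 (φ1 (Quot.mk _ (FreeDi.single e1))) = f2 (φ2 (Quot.mk _ (FreeDi.single e2)))
        rw [hφ1e, hφ2e, hf1.2.2, hf2.2.2]
    | refl a => rfl
    | symm _ ih => exact ih.symm
    | trans _ _ ih1 ih2 => exact ih1.trans ih2
    | lcongr _ _ ih1 ih2 => rw [FPAux.evF_opL, FPAux.evF_opL, ih1, ih2]
    | rcongr _ _ ih1 ih2 => rw [FPAux.evF_opR, FPAux.evF_opR, ih1, ih2]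
  refine ⟨Quot.lift (FPAux.evF G.toDisemigroupStruct G.one gen) evcong,
    ⟨⟨?_, ?_, ?_⟩, ?_, ?_⟩, ?_⟩
  · intro p q
    induction p using Quot.ind with | _ a =>
    induction q using Quot.ind with | _ b =>
    exact FPAux.evF_opL G.toDisemigroupStruct G.one gen a b
  · intro p q
    induction p using Quot.ind with | _ a =>
    induction q using Quot.ind with | _ b =>
    exact FPAux.evF_opR G.toDisemigroupStruct G.one gen a b
  · show FPAux.evF G.toDisemigroupStruct G.one gen (FreeDi.single (Sum.inl e1)) = G.one
    rw [FPAux.evF_single]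
    show f1 (φ1 (Quot.mk _ (FreeDi.single e1))) = G.one
    rw [hφ1e, hf1.2.2]
  · funext d
    obtain ⟨w, rfl⟩ := rep1 d
    show Quot.lift (FPAux.evF G.toDisemigroupStruct G.one gen) evcong
      (g1 (φ1 (Quot.mk _ w))) = _
    rw [hg1]
    exact ev1 w
  · funext d
    obtain ⟨w, rfl⟩ := rep2 d
    show Quot.lift (FPAux.evF G.toDisemigroupStruct G.one gen) evcong
      (g2 (φ2 (Quot.mk _ w))) = _
    rw [hg2]
    exact ev2 w
  · rintro ψ ⟨hψ, hψ1, hψ2⟩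
    funext q
    induction q using Quot.ind with | _ a =>
    have hsingle : ∀ x : X1 ⊕ X2, ψ (Quot.mk _ (FreeDi.single x)) =
        Quot.lift (FPAux.evF G.toDisemigroupStruct G.one gen) evcong
          (Quot.mk _ (FreeDi.single x)) := by
      intro x
      cases x with
      | inl x =>
        exact (congrArg ψ (hg1 (FreeDi.single x)).symm).trans
          ((congrFun hψ1 _).trans (ev1 (FreeDi.single x)).symm)
      | inr x =>
        exact (congrArg ψ (hg2 (FreeDi.single x)).symm).trans
          ((congrFun hψ2 _).trans (ev2 (FreeDi.single x)).symm)
    refine FPAux.fd_induction (fun a => ψ (Quot.mk _ a) =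
      Quot.lift (FPAux.evF G.toDisemigroupStruct G.one gen) evcong (Quot.mk _ a))
      hsingle ?_ ?_ a
    · intro x b ihb
      have h := hψ.1 (Quot.mk (DiCong S) (FreeDi.single x)) (Quot.mk _ b)
      rw [hsingle x, ihb] at h
      exact h.trans (FPAux.evF_opL G.toDisemigroupStruct G.one gen (FreeDi.single x) b).symm
    · intro x b ihb
      have h := hψ.2.1 (Quot.mk (DiCong S) (FreeDi.single x)) (Quot.mk _ b)
      rw [hsingle x, ihb] at h
      exact h.trans (FPAux.evF_opR G.toDisemigroupStruct G.one gen (FreeDi.single x) b).symm
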